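/- Let U ⊆ ℝⁿ be open, T > 0, x₀ ∈ U, and let F be a set of functions f : ℝ × U → ℝⁿ, each continuous on [0,T] × U, with a common Lipschitz constant K ≥ 1 in the second argument uniformly for t ∈ [0,T], and a common bound M with ‖f(t,u)‖ ≤ M for all f ∈ F, u ∈ U, t ∈ [0,T]. Let a, b : [0,T] → F be step functions (right-continuous with left limits, finitely many discontinuities), and let x_a, x_b : [0,T] → U be the corresponding matching output signals with x_a(0) = x_b(0) = x₀ (continuous, and differentiable with x_a'(t) = a(t)(t, x_a(t)) at every t where a is continuous, and similarly for b). Then sup_{t∈[0,T]} ‖x_a(t) − x_b(t)‖ ≤ 2 M e^{TK} · λ({t ∈ [0,T] : a(t) ≠ b(t)}), where λ is the Lebesgue measure. In particular, the mapping a ↦ x_a is continuous from the metric d_T(a,b) = λ({t : a(t) ≠ b(t)}) to the supremum norm. -/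

import Mathlib

open Set Real MeasureTheory

lemma ftc_finset {E : Type*} [NormedAddCommGroup E] [NormedSpace ℝ E] [CompleteSpace E]
    (S : Finset ℝ) :
    ∀ (f f' : ℝ → E) (a b : ℝ), a ≤ b → ContinuousOn f (Icc a b) →
      (∀ x ∈ Ioo a b, x ∉ S → HasDerivAt f (f' x) x) →
      IntervalIntegrable f' volume a b → ∫ y in a..b, f' y = f b - f a := by
  induction S using Finset.induction_on with
  | empty =>
    intro f f' a b hab hc hd hi
    exact intervalIntegral.integral_eq_sub_of_hasDerivAt_of_le hab hc
      (fun x hx => hd x hx (by simp)) hi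
  | @insert c S' hcS ih =>
    intro f f' a b hab hc hd hi
    by_cases hcab : c ∈ Ioo a b
    · have hac : a ≤ c := hcab.1.le
      have hcb : c ≤ b := hcab.2.le
      have hi1 : IntervalIntegrable f' volume a c :=
        hi.mono_set (by rw [uIcc_of_le hac, uIcc_of_le hab]; exact Icc_subset_Icc le_rfl hcb)
      have hi2 : IntervalIntegrable f' volume c b :=
        hi.mono_set (by rw [uIcc_of_le hcb, uIcc_of_le hab]; exact Icc_subset_Icc hac le_rfl)
      have h1 : ∫ y in a..c, f' y = f c - f a := by
        refine ih f f' a c hac (hc.mono (Icc_subset_Icc le_rfl hcb)) (fun x hx hxS => ?_) hi1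
        refine hd x ⟨hx.1, hx.2.trans hcab.2⟩ ?_
        simp only [Finset.mem_insert, not_or]
        exact ⟨ne_of_lt hx.2, hxS⟩
      have h2 : ∫ y in c..b, f' y = f b - f c := by
        refine ih f f' c b hcb (hc.mono (Icc_subset_Icc hac le_rfl)) (fun x hx hxS => ?_) hi2
        refine hd x ⟨hcab.1.trans hx.1, hx.2⟩ ?_
        simp only [Finset.mem_insert, not_or]
        exact ⟨(ne_of_gt hx.1), hxS⟩
      rw [← intervalIntegral.integral_add_adjacent_intervals hi1 hi2, h1, h2]
      abel
    · refine ih f f' a b hab hc (fun x hx hxS => hd x hx ?_) hi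
      simp only [Finset.mem_insert, not_or]
      exact ⟨fun h => hcab (h ▸ hx), hxS⟩

/-- Theorem 2.3: if `xa` and `xb` are the matching output signals for two mode-switch
step signals `a` and `b` taking values in a family `F` of vector fields with common
Lipschitz constant `K ≥ 1` and common bound `M`, then
`‖xa t - xb t‖ ≤ 2 M exp (T K) · λ({t ∈ [0,T] : a t ≠ b t})` for all `t ∈ [0,T]`;
in particular the map `a ↦ x_a` is continuous. -/
theorem stmt2 (n : ℕ) (U : Set (EuclideanSpace ℝ (Fin n))) (hU : IsOpen U)
    (T : ℝ) (hT : 0 < T) (x₀ : EuclideanSpace ℝ (Fin n)) (hx₀ : x₀ ∈ U)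
    (F : Set (ℝ → EuclideanSpace ℝ (Fin n) → EuclideanSpace ℝ (Fin n)))
    (K M : ℝ) (hK : 1 ≤ K)
    (hlip : ∀ f ∈ F, ∀ t ∈ Icc (0:ℝ) T, ∀ u ∈ U, ∀ v ∈ U, ‖f t u - f t v‖ ≤ K * ‖u - v‖)
    (hbound : ∀ f ∈ F, ∀ t ∈ Icc (0:ℝ) T, ∀ u ∈ U, ‖f t u‖ ≤ M)
    (a b : ℝ → ℝ → EuclideanSpace ℝ (Fin n) → EuclideanSpace ℝ (Fin n))
    (haF : ∀ t ∈ Icc (0:ℝ) T, a t ∈ F) (hbF : ∀ t ∈ Icc (0:ℝ) T, b t ∈ F)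
    (Sa Sb : Finset ℝ)
    (haStep : ∀ t ∈ Icc (0:ℝ) T, t ∉ Sa →
      ∃ ε > 0, ∀ s ∈ Icc (0:ℝ) T, |s - t| < ε → a s = a t)
    (hbStep : ∀ t ∈ Icc (0:ℝ) T, t ∉ Sb →
      ∃ ε > 0, ∀ s ∈ Icc (0:ℝ) T, |s - t| < ε → b s = b t)
    (xa xb : ℝ → EuclideanSpace ℝ (Fin n))
    (hxa0 : xa 0 = x₀) (hxb0 : xb 0 = x₀)
    (hxac : ContinuousOn xa (Icc 0 T)) (hxbc : ContinuousOn xb (Icc 0 T))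
    (hxaU : ∀ t ∈ Icc (0:ℝ) T, xa t ∈ U) (hxbU : ∀ t ∈ Icc (0:ℝ) T, xb t ∈ U)
    (hxad : ∀ t ∈ Ioo (0:ℝ) T, (∃ ε > 0, ∀ s, |s - t| < ε → a s = a t) →
      HasDerivAt xa (a t t (xa t)) t)
    (hxbd : ∀ t ∈ Ioo (0:ℝ) T, (∃ ε > 0, ∀ s, |s - t| < ε → b s = b t) →
      HasDerivAt xb (b t t (xb t)) t) :
    ∀ t ∈ Icc (0:ℝ) T, ‖xa t - xb t‖ ≤
      2 * M * Real.exp (T * K) * (volume {t ∈ Icc (0:ℝ) T | a t ≠ b t}).toReal := by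
  have h0T : (0:ℝ) ∈ Icc (0:ℝ) T := ⟨le_refl _, hT.le⟩
  have hM : 0 ≤ M := le_trans (norm_nonneg _) (hbound _ (haF 0 h0T) 0 h0T x₀ hx₀)
  have hK0 : (0:ℝ) < K := lt_of_lt_of_le one_pos hK
  set D : Set ℝ := {t ∈ Icc (0:ℝ) T | a t ≠ b t} with hD
  set E : Set ℝ := toMeasurable volume D with hE
  have hEmeas : MeasurableSet E := measurableSet_toMeasurable _ _
  have hEvol : volume E = volume D := measure_toMeasurable _
  have hDE : D ⊆ E := subset_toMeasurable _ _
  have hEfin : volume E ≠ ⊤ := by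
    rw [hEvol]
    exact ne_of_lt (lt_of_le_of_lt (measure_mono (sep_subset _ _)) measure_Icc_lt_top)
  set C : ℝ := 2 * M * (volume E).toReal with hC
  have hC0 : 0 ≤ C := by positivity
  -- the truncation map and the distance function
  set r : ℝ → ℝ := fun s => max 0 (min s T) with hr
  have hrmem : ∀ s, r s ∈ Icc (0:ℝ) T := fun s =>
    ⟨le_max_left _ _, max_le hT.le (min_le_right _ _)⟩
  have hreq : ∀ s ∈ Icc (0:ℝ) T, r s = s := by
    intro s hs
    simp only [hr, min_eq_left hs.2, max_eq_right hs.1]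
  set g : ℝ → ℝ := fun s => ‖xa (r s) - xb (r s)‖ with hg
  have hgc : Continuous g := by
    have hrc : Continuous r := continuous_const.max (continuous_id.min continuous_const)
    have h1 : ContinuousOn (fun s => xa s - xb s) (Icc 0 T) := hxac.sub hxbc
    have h2 : ContinuousOn g univ := (h1.comp hrc.continuousOn (fun s _ => hrmem s)).norm
    exact continuousOn_univ.mp h2
  have hgnn : ∀ s, 0 ≤ g s := fun s => norm_nonneg _
  set y : ℝ → EuclideanSpace ℝ (Fin n) := fun s => xa s - xb s with hy
  set w : ℝ → EuclideanSpace ℝ (Fin n) := fun s => deriv xa s - deriv xb s with hw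
  have hS0 : volume ((↑(Sa ∪ Sb) : Set ℝ) ∪ {T}) = 0 :=
    measure_union_null ((Finset.finite_toSet _).measure_zero _) (measure_singleton _)
  have hderiv : ∀ s ∈ Ioo (0:ℝ) T, s ∉ (Sa ∪ Sb : Finset ℝ) →
      HasDerivAt y (w s) s ∧ ‖w s‖ ≤ 2*M ∧ ‖w s‖ ≤ K * g s + 2*M * E.indicator 1 s := by
    intro s hs hsS
    have hsIcc : s ∈ Icc (0:ℝ) T := ⟨hs.1.le, hs.2.le⟩
    simp only [Finset.mem_union, not_or] at hsS
    obtain ⟨εa, hεa, hεa'⟩ := haStep s hsIcc hsS.1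
    obtain ⟨εb, hεb, hεb'⟩ := hbStep s hsIcc hsS.2
    have hmema : ∀ ε₀ : ℝ, 0 < ε₀ → ε₀ ≤ εa → ε₀ ≤ s → ε₀ ≤ T - s →
        ∀ s', |s' - s| < ε₀ → a s' = a s := by
      intro ε₀ h0 h1 h2 h3 s' h
      have h' := abs_lt.mp h
      exact hεa' s' ⟨by linarith, by linarith⟩ (lt_of_lt_of_le h h1)
    have hmemb : ∀ ε₀ : ℝ, 0 < ε₀ → ε₀ ≤ εb → ε₀ ≤ s → ε₀ ≤ T - s →
        ∀ s', |s' - s| < ε₀ → b s' = b s := by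
      intro ε₀ h0 h1 h2 h3 s' h
      have h' := abs_lt.mp h
      exact hεb' s' ⟨by linarith, by linarith⟩ (lt_of_lt_of_le h h1)
    have hTs : 0 < T - s := by linarith [hs.2]
    have hda : HasDerivAt xa (a s s (xa s)) s := by
      refine hxad s hs ⟨min εa (min s (T - s)), lt_min hεa (lt_min hs.1 hTs), ?_⟩
      exact hmema _ (lt_min hεa (lt_min hs.1 hTs))
        (min_le_left _ _) (le_trans (min_le_right _ _) (min_le_left _ _))
        (le_trans (min_le_right _ _) (min_le_right _ _))
    have hdb : HasDerivAt xb (b s s (xb s)) s := by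
      refine hxbd s hs ⟨min εb (min s (T - s)), lt_min hεb (lt_min hs.1 hTs), ?_⟩
      exact hmemb _ (lt_min hεb (lt_min hs.1 hTs))
        (min_le_left _ _) (le_trans (min_le_right _ _) (min_le_left _ _))
        (le_trans (min_le_right _ _) (min_le_right _ _))
    have hws : w s = a s s (xa s) - b s s (xb s) := by
      simp only [hw, hda.deriv, hdb.deriv]
    refine ⟨hws ▸ hda.sub hdb, ?_, ?_⟩
    · rw [hws]
      calc ‖a s s (xa s) - b s s (xb s)‖ ≤ ‖a s s (xa s)‖ + ‖b s s (xb s)‖ := norm_sub_le _ _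
        _ ≤ 2*M := by
            have h1 := hbound _ (haF s hsIcc) s hsIcc _ (hxaU s hsIcc)
            have h2 := hbound _ (hbF s hsIcc) s hsIcc _ (hxbU s hsIcc)
            linarith
    · have hind : (0:ℝ) ≤ E.indicator 1 s := Set.indicator_nonneg (fun _ _ => zero_le_one) s
      have hgs : g s = ‖xa s - xb s‖ := by simp only [hg, hreq s hsIcc]
      by_cases hab : a s = b s
      · rw [hws, ← hab]
        have := hlip _ (haF s hsIcc) s hsIcc _ (hxaU s hsIcc) _ (hxbU s hsIcc)
        rw [hgs]
        nlinarith
      · have hsE : s ∈ E := hDE ⟨hsIcc, hab⟩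
        rw [Set.indicator_of_mem hsE]
        have h2M : ‖w s‖ ≤ 2*M := by
          rw [hws]
          calc ‖a s s (xa s) - b s s (xb s)‖ ≤ ‖a s s (xa s)‖ + ‖b s s (xb s)‖ :=
                norm_sub_le _ _
            _ ≤ 2*M := by
                have h1 := hbound _ (haF s hsIcc) s hsIcc _ (hxaU s hsIcc)
                have h2 := hbound _ (hbF s hsIcc) s hsIcc _ (hxbU s hsIcc)
                linarith
        have := mul_nonneg hK0.le (hgnn s)
        simp only [Pi.one_apply]
        linarith
  -- key integral inequality
  have key : ∀ u ∈ Icc (0:ℝ) T, g u ≤ C + K * ∫ s in (0:ℝ)..u, g s := by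
    intro u hu
    obtain ⟨hu0, huT⟩ := hu
    have haeP : ∀ᵐ s ∂volume.restrict (Ioc 0 u),
        ‖w s‖ ≤ 2*M ∧ ‖w s‖ ≤ K * g s + 2*M * E.indicator 1 s := by
      rw [ae_restrict_iff' measurableSet_Ioc]
      have h := (measure_eq_zero_iff_ae_notMem).mp hS0
      filter_upwards [h] with s hs hsIoc
      simp only [mem_union, mem_singleton_iff, not_or] at hs
      have hsT : s < T := lt_of_le_of_ne (hsIoc.2.trans huT) hs.2
      exact (hderiv s ⟨hsIoc.1, hsT⟩ hs.1).2
    have hwmeas : AEStronglyMeasurable w (volume.restrict (Ioc 0 u)) :=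
      ((measurable_deriv xa).sub (measurable_deriv xb)).aestronglyMeasurable
    have hwint : IntervalIntegrable w volume 0 u := by
      rw [intervalIntegrable_iff_integrableOn_Ioc_of_le hu0]
      refine Integrable.mono' (integrable_const (2*M)) hwmeas ?_
      exact haeP.mono fun s h => h.1
    have hftc : ∫ s in (0:ℝ)..u, w s = y u - y 0 := by
      refine ftc_finset (Sa ∪ Sb) y w 0 u hu0
        ((hxac.sub hxbc).mono (Icc_subset_Icc le_rfl huT)) (fun x hx hxS => ?_) hwint
      exact (hderiv x ⟨hx.1, lt_of_lt_of_le hx.2 huT⟩ hxS).1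
    have hy0 : y 0 = 0 := by simp [hy, hxa0, hxb0]
    have hindint : IntegrableOn (E.indicator (1 : ℝ → ℝ)) (Ioc 0 u) volume := by
      rw [IntegrableOn, integrable_indicator_iff hEmeas]
      refine integrableOn_const (ne_of_lt ?_)
      calc (volume.restrict (Ioc 0 u)) E ≤ volume (Ioc 0 u) := by
            rw [Measure.restrict_apply hEmeas]
            exact measure_mono inter_subset_right
        _ < ⊤ := measure_Ioc_lt_top
    have hψint : IntervalIntegrable (fun s => K * g s + 2*M * E.indicator 1 s) volume 0 u := by
      refine IntervalIntegrable.add ((continuous_const.mul hgc).intervalIntegrable 0 u) ?_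
      rw [intervalIntegrable_iff_integrableOn_Ioc_of_le hu0]
      exact hindint.const_mul (2*M)
    have hnorm : ‖y u‖ ≤ |∫ s in (0:ℝ)..u, K * g s + 2*M * E.indicator 1 s| := by
      have hyu : y u = ∫ s in (0:ℝ)..u, w s := by rw [hftc, hy0, sub_zero]
      rw [hyu]
      refine intervalIntegral.norm_integral_le_abs_of_norm_le ?_ hψint
      rw [uIoc_of_le hu0]
      exact haeP.mono fun s h => h.2
    have hψnn : 0 ≤ ∫ s in (0:ℝ)..u, K * g s + 2*M * E.indicator 1 s := by
      refine intervalIntegral.integral_nonneg hu0 fun s _ => ?_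
      have h1 := mul_nonneg hK0.le (hgnn s)
      have h2 : (0:ℝ) ≤ E.indicator 1 s := Set.indicator_nonneg (fun _ _ => zero_le_one) s
      nlinarith
    rw [abs_of_nonneg hψnn] at hnorm
    have hsplit : ∫ s in (0:ℝ)..u, K * g s + 2*M * E.indicator 1 s
        = K * (∫ s in (0:ℝ)..u, g s) + 2*M * ∫ s in (0:ℝ)..u, E.indicator 1 s := by
      rw [intervalIntegral.integral_add (f := fun s => K * g s) ((continuous_const.mul hgc).intervalIntegrable 0 u)
            (by rw [intervalIntegrable_iff_integrableOn_Ioc_of_le hu0]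
                exact hindint.const_mul (2*M)),
          intervalIntegral.integral_const_mul, intervalIntegral.integral_const_mul]
    have hindval : ∫ s in (0:ℝ)..u, E.indicator 1 s ≤ (volume E).toReal := by
      rw [intervalIntegral.integral_of_le hu0, setIntegral_indicator hEmeas]
      have : ∫ s in Ioc 0 u ∩ E, (1 : ℝ→ℝ) s ∂volume = (volume (Ioc 0 u ∩ E)).toReal := by
        simp [setIntegral_const, measureReal_def]
      rw [this]
      exact ENNReal.toReal_mono hEfin (measure_mono inter_subset_right)
    have hgu : g u = ‖y u‖ := by simp only [hg, hy, hreq u ⟨hu0, huT⟩]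
    rw [hgu]
    calc ‖y u‖ ≤ K * (∫ s in (0:ℝ)..u, g s) + 2*M * ∫ s in (0:ℝ)..u, E.indicator 1 s := by
          rw [← hsplit]; exact hnorm
      _ ≤ C + K * ∫ s in (0:ℝ)..u, g s := by
          have := mul_le_mul_of_nonneg_left hindval (by linarith : (0:ℝ) ≤ 2*M)
          rw [hC]; linarith
  -- Grönwall
  set Fu : ℝ → ℝ := fun u => C + K * ∫ s in (0:ℝ)..u, g s with hFudef
  have hFu : ∀ u, HasDerivAt Fu (K * g u) u := by
    intro u
    have h1 : HasDerivAt (fun v => ∫ s in (0:ℝ)..v, g s) (g u) u := by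
      refine intervalIntegral.integral_hasDerivAt_right (hgc.intervalIntegrable _ _)
        ?_ hgc.continuousAt
      exact hgc.stronglyMeasurable.stronglyMeasurableAtFilter
    exact (h1.const_mul K).const_add C
  have hgF : ∀ u ∈ Icc (0:ℝ) T, g u ≤ Fu u := key
  have hgron := norm_le_gronwallBound_of_norm_deriv_right_le (f := Fu)
    (f' := fun u => K * g u) (δ := C) (K := K) (ε := 0) (a := 0) (b := T)
    (fun u _ => (hFu u).continuousAt.continuousWithinAt)
    (fun u _ => (hFu u).hasDerivWithinAt)
    (by simp only [hFudef, intervalIntegral.integral_same, mul_zero, add_zero,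
          Real.norm_eq_abs, abs_of_nonneg hC0]; exact le_refl C)
    (fun u hu => by
      rw [Real.norm_eq_abs, Real.norm_eq_abs, abs_of_nonneg (mul_nonneg hK0.le (hgnn u)),
        add_zero]
      have h1 : g u ≤ Fu u := hgF u ⟨hu.1, hu.2.le⟩
      have h2 : Fu u ≤ |Fu u| := le_abs_self _
      nlinarith)
  intro t ht
  have hfin := hgron t ht
  rw [gronwallBound_ε0, sub_zero, Real.norm_eq_abs] at hfin
  have h1 : ‖xa t - xb t‖ = g t := by simp only [hg, hreq t ht]
  have h2 : g t ≤ Fu t := hgF t ht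
  have h3 : Fu t ≤ |Fu t| := le_abs_self _
  have h4 : Real.exp (K * t) ≤ Real.exp (T * K) := by
    rw [mul_comm T K]
    exact Real.exp_le_exp.2 (mul_le_mul_of_nonneg_left ht.2 hK0.le)
  have h5 : C * Real.exp (K * t) ≤ C * Real.exp (T * K) :=
    mul_le_mul_of_nonneg_left h4 hC0
  have h6 : (volume E).toReal = (volume D).toReal := by rw [hEvol]
  rw [h1]
  calc g t ≤ |Fu t| := h2.trans h3
    _ ≤ C * Real.exp (K * t) := hfin
    _ ≤ C * Real.exp (T * K) := h5
    _ = 2 * M * Real.exp (T * K) * (volume D).toReal := by rw [hC, h6]; ring
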